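/- For any ρ, σ ∈ S(d) and r ≥ 0, the total number of r-step walks from ρ to σ on the transposition Cayley graph of S(d) equals the sum over all monotone r-step walks W from ρ to σ of the multinomial coefficient r!/(m₂(W)! ⋯ m_d(W)!), where m_t(W) is the number of steps of colour t in W. -/

import Mathlib

/-- A transposition step `(s t)` of `S(d)` recorded with `s < t`; its colour is `t`. -/
def Step (d : ℕ) : Type := {p : Fin d × Fin d // p.1 < p.2}

/-- The permutation (transposition) corresponding to a step. -/
def stepPerm {d : ℕ} (x : Step d) : Equiv.Perm (Fin d) := Equiv.swap x.1.1 x.1.2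

/-- The colour of a step, i.e. the larger of the two interchanged points. -/
def colour {d : ℕ} (x : Step d) : Fin d := x.1.2

/-- The product of a tuple of steps, taken in order. -/
def stepProd {d r : ℕ} (W : Fin r → Step d) : Equiv.Perm (Fin d) :=
  (List.ofFn fun j => stepPerm (W j)).prod


instance {d : ℕ} : Fintype (Step d) :=
  inferInstanceAs (Fintype {p : Fin d × Fin d // p.1 < p.2})

instance {d : ℕ} : DecidableEq (Step d) :=
  inferInstanceAs (DecidableEq {p : Fin d × Fin d // p.1 < p.2})

namespace Stmt19Aux

open Finset Equiv

variable {d r : ℕ}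

lemma prod_ofFn_adj {M : Type*} [Monoid M] {r : ℕ} (f g : Fin r → M) (p q : Fin r)
    (hq : (q : ℕ) = (p : ℕ) + 1)
    (hne : ∀ k : Fin r, k ≠ p → k ≠ q → f k = g k)
    (hswap : f p * f q = g p * g q) :
    (List.ofFn f).prod = (List.ofFn g).prod := by
  have hp1 : (p : ℕ) + 1 < r := hq ▸ q.isLt
  have decomp : ∀ h : Fin r → M, List.ofFn h =
      (List.ofFn h).take (p : ℕ) ++ h p :: h q :: (List.ofFn h).drop ((p : ℕ) + 2) := by
    intro h
    have l1 : (p : ℕ) < (List.ofFn h).length := by simp [p.isLt]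
    have l2 : (p : ℕ) + 1 < (List.ofFn h).length := by simpa using hp1
    conv_lhs => rw [← List.take_append_drop (p : ℕ) (List.ofFn h)]
    rw [List.drop_eq_getElem_cons l1, List.drop_eq_getElem_cons l2]
    rw [List.getElem_ofFn, List.getElem_ofFn]
    simp only [Fin.eta]
    rw [show (⟨(p:ℕ)+1, by simpa using l2⟩ : Fin r) = q from Fin.ext hq.symm]
  have ht : (List.ofFn f).take (p : ℕ) = (List.ofFn g).take (p : ℕ) := by
    apply List.ext_getElem (by simp)
    intro n h1 h2
    have hn : n < (p : ℕ) := by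
      simp only [List.length_take, List.length_ofFn, lt_min_iff] at h1; exact h1.1
    simp only [List.getElem_take, List.getElem_ofFn]
    exact hne _ (by simp [Fin.ext_iff]; omega) (by simp [Fin.ext_iff]; omega)
  have hd : (List.ofFn f).drop ((p : ℕ) + 2) = (List.ofFn g).drop ((p : ℕ) + 2) := by
    apply List.ext_getElem (by simp)
    intro n h1 h2
    simp only [List.getElem_drop, List.getElem_ofFn]
    exact hne _ (by simp [Fin.ext_iff]; omega) (by simp [Fin.ext_iff]; omega)
  rw [decomp f, decomp g, ht, hd]
  simp only [List.prod_append, List.prod_cons, ← mul_assoc]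
  rw [mul_assoc _ (f p) (f q), hswap, ← mul_assoc]

/-- conjugate `y` by `x` when `colour x < colour y` (else `y`). -/
def conjStep (x y : Step d) : Step d :=
  if h : colour x < colour y then
    ⟨(stepPerm x y.1.1, y.1.2), by
      have h1 : x.1.1 < y.1.2 := lt_trans x.2 h
      have h2 : x.1.2 < y.1.2 := h
      have h3 : y.1.1 < y.1.2 := y.2
      show stepPerm x y.1.1 < y.1.2
      unfold stepPerm
      rw [Equiv.swap_apply_def]
      split_ifs <;> assumption⟩
  else y

@[simp] lemma colour_conjStep (x y : Step d) : colour (conjStep x y) = colour y := by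
  by_cases h : colour x < colour y
  · rw [show conjStep x y = _ from dif_pos h]; rfl
  · rw [show conjStep x y = y from dif_neg h]

lemma conjStep_fst (x y : Step d) (h : colour x < colour y) :
    (conjStep x y).1.1 = stepPerm x y.1.1 := by
  rw [show conjStep x y = _ from dif_pos h]

lemma conjStep_snd (x y : Step d) (h : colour x < colour y) :
    (conjStep x y).1.2 = y.1.2 := by
  rw [show conjStep x y = _ from dif_pos h]

lemma stepPerm_conjStep (x y : Step d) (h : colour x < colour y) :
    stepPerm (conjStep x y) = stepPerm x * stepPerm y * stepPerm x := by
  have hy2 : stepPerm x y.1.2 = y.1.2 :=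
    Equiv.swap_apply_of_ne_of_ne (ne_of_gt (lt_trans x.2 h)) (ne_of_gt h)
  have : stepPerm (conjStep x y) = Equiv.swap (stepPerm x y.1.1) (stepPerm x y.1.2) := by
    rw [hy2]; unfold stepPerm; rw [conjStep_fst x y h, conjStep_snd x y h]; rfl
  rw [this, Equiv.swap_apply_apply,
    show (stepPerm x)⁻¹ = stepPerm x from Equiv.swap_inv x.1.1 x.1.2]
  rfl

lemma mul_conjStep (x y : Step d) (h : colour x < colour y) :
    stepPerm x * stepPerm y = stepPerm (conjStep x y) * stepPerm x := by
  rw [stepPerm_conjStep x y h, mul_assoc]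
  unfold stepPerm
  rw [Equiv.swap_mul_self, mul_one]

lemma conjStep_mul (x y : Step d) (h : colour x < colour y) :
    stepPerm x * stepPerm (conjStep x y) = stepPerm y * stepPerm x := by
  rw [stepPerm_conjStep x y h, ← mul_assoc, ← mul_assoc]
  unfold stepPerm
  rw [Equiv.swap_mul_self, one_mul]

lemma conjStep_conjStep (x y : Step d) (h : colour x < colour y) :
    conjStep x (conjStep x y) = y := by
  have h' : colour x < colour (conjStep x y) := by rwa [colour_conjStep]
  apply Subtype.ext
  apply Prod.ext
  · rw [conjStep_fst x _ h', conjStep_fst x y h]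
    unfold stepPerm
    exact Equiv.swap_apply_self _ _ _
  · rw [conjStep_snd x _ h', conjStep_snd x y h]

open scoped Classical

/-- colour word of a walk -/
def word (W : Fin r → Step d) : Fin r → Fin d := fun j => colour (W j)

/-- number of walks from ρ to σ with colour word `c` -/
noncomputable def Nc (ρ σ : Equiv.Perm (Fin d)) (c : Fin r → Fin d) : ℕ :=
  (Finset.univ.filter (fun W : Fin r → Step d =>
     ρ * stepProd W = σ ∧ word W = c)).card

variable (p q : Fin r)

def phiW (W : Fin r → Step d) : Fin r → Step d :=
  fun k => if k = p then conjStep (W p) (W q) else if k = q then W p else W k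

def psiW (W : Fin r → Step d) : Fin r → Step d :=
  fun k => if k = p then W q else if k = q then conjStep (W q) (W p) else W k

variable {p q}

lemma stepProd_phiW (hq : (q : ℕ) = (p : ℕ) + 1) (W : Fin r → Step d)
    (hcol : colour (W p) < colour (W q)) : stepProd (phiW p q W) = stepProd W := by
  have hpq : p ≠ q := by intro h; rw [h] at hq; omega
  apply prod_ofFn_adj _ _ p q hq
  · intro k hk1 hk2
    simp [phiW, hk1, hk2]
  · have e1 : phiW p q W p = conjStep (W p) (W q) := by simp [phiW]
    have e2 : phiW p q W q = W p := by simp [phiW, Ne.symm hpq]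
    rw [e1, e2]
    exact (mul_conjStep _ _ hcol).symm

lemma stepProd_psiW (hq : (q : ℕ) = (p : ℕ) + 1) (W : Fin r → Step d)
    (hcol : colour (W q) < colour (W p)) : stepProd (psiW p q W) = stepProd W := by
  have hpq : p ≠ q := by intro h; rw [h] at hq; omega
  apply prod_ofFn_adj _ _ p q hq
  · intro k hk1 hk2
    simp [psiW, hk1, hk2]
  · have e1 : psiW p q W p = W q := by simp [psiW]
    have e2 : psiW p q W q = conjStep (W q) (W p) := by simp [psiW, Ne.symm hpq]
    rw [e1, e2]
    exact conjStep_mul _ _ hcol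

lemma word_phiW (hq : (q : ℕ) = (p : ℕ) + 1) (W : Fin r → Step d) {c : Fin r → Fin d}
    (hW : word W = c) : word (phiW p q W) = c ∘ Equiv.swap p q := by
  have hpq : p ≠ q := by intro h; rw [h] at hq; omega
  funext k
  simp only [word, phiW, Function.comp_apply]
  rcases eq_or_ne k p with rfl | hk1
  · rw [if_pos rfl, Equiv.swap_apply_left, colour_conjStep, ← hW]; rfl
  · rcases eq_or_ne k q with rfl | hk2
    · rw [if_neg hk1, if_pos rfl, Equiv.swap_apply_right, ← hW]; rfl
    · rw [if_neg hk1, if_neg hk2, Equiv.swap_apply_of_ne_of_ne hk1 hk2, ← hW]; rfl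

lemma word_psiW (hq : (q : ℕ) = (p : ℕ) + 1) (W : Fin r → Step d) {c : Fin r → Fin d}
    (hW : word W = c) : word (psiW p q W) = c ∘ Equiv.swap p q := by
  have hpq : p ≠ q := by intro h; rw [h] at hq; omega
  funext k
  simp only [word, psiW, Function.comp_apply]
  rcases eq_or_ne k p with rfl | hk1
  · rw [if_pos rfl, Equiv.swap_apply_left, ← hW]; rfl
  · rcases eq_or_ne k q with rfl | hk2
    · rw [if_neg hk1, if_pos rfl, Equiv.swap_apply_right, colour_conjStep, ← hW]; rfl
    · rw [if_neg hk1, if_neg hk2, Equiv.swap_apply_of_ne_of_ne hk1 hk2, ← hW]; rfl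

lemma psiW_phiW (hpq : p ≠ q) (W : Fin r → Step d)
    (hcol : colour (W p) < colour (W q)) : psiW p q (phiW p q W) = W := by
  funext k
  rcases eq_or_ne k p with rfl | hk1
  · simp [psiW, phiW, Ne.symm hpq]
  · rcases eq_or_ne k q with rfl | hk2
    · simp [psiW, phiW, hk1, Ne.symm hpq, conjStep_conjStep _ _ hcol]
    · simp [psiW, phiW, hk1, hk2]

lemma phiW_psiW (hpq : p ≠ q) (W : Fin r → Step d)
    (hcol : colour (W q) < colour (W p)) : phiW p q (psiW p q W) = W := by
  funext k
  rcases eq_or_ne k p with rfl | hk1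
  · simp [psiW, phiW, Ne.symm hpq, conjStep_conjStep _ _ hcol]
  · rcases eq_or_ne k q with rfl | hk2
    · simp [psiW, phiW, hk1, Ne.symm hpq]
    · simp [psiW, phiW, hk1, hk2]

lemma Nc_swap_of_lt (ρ σ : Equiv.Perm (Fin d)) (c : Fin r → Fin d)
    (hq : (q : ℕ) = (p : ℕ) + 1) (hlt : c p < c q) :
    Nc ρ σ c = Nc ρ σ (c ∘ Equiv.swap p q) := by
  have hpq : p ≠ q := by intro h; rw [h] at hq; omega
  unfold Nc
  apply Finset.card_bij' (fun W _ => phiW p q W) (fun V _ => psiW p q V)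
  · intro W hW
    rw [Finset.mem_filter] at hW ⊢
    obtain ⟨_, h1, h2⟩ := hW
    have hcol : colour (W p) < colour (W q) := by
      have e1 : colour (W p) = c p := congrFun h2 p
      have e2 : colour (W q) = c q := congrFun h2 q
      rw [e1, e2]; exact hlt
    exact ⟨Finset.mem_univ _, by rw [stepProd_phiW hq W hcol]; exact h1,
      word_phiW hq W h2⟩
  · intro V hV
    rw [Finset.mem_filter] at hV ⊢
    obtain ⟨_, h1, h2⟩ := hV
    have hcol : colour (V q) < colour (V p) := by
      have e1 : colour (V p) = c q := by
        simpa [word, Equiv.swap_apply_left] using congrFun h2 p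
      have e2 : colour (V q) = c p := by
        simpa [word, Equiv.swap_apply_right] using congrFun h2 q
      rw [e1, e2]; exact hlt
    refine ⟨Finset.mem_univ _, by rw [stepProd_psiW hq V hcol]; exact h1, ?_⟩
    rw [word_psiW hq V h2]
    funext k
    simp [Function.comp_apply, Equiv.swap_apply_self]
  · intro W hW
    rw [Finset.mem_filter] at hW
    have hcol : colour (W p) < colour (W q) := by
      have e1 : colour (W p) = c p := congrFun hW.2.2 p
      have e2 : colour (W q) = c q := congrFun hW.2.2 q
      rw [e1, e2]; exact hlt
    exact psiW_phiW hpq W hcol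
  · intro V hV
    rw [Finset.mem_filter] at hV
    have hcol : colour (V q) < colour (V p) := by
      have e1 : colour (V p) = c q := by
        simpa [word, Equiv.swap_apply_left] using congrFun hV.2.2 p
      have e2 : colour (V q) = c p := by
        simpa [word, Equiv.swap_apply_right] using congrFun hV.2.2 q
      rw [e1, e2]; exact hlt
    exact phiW_psiW hpq V hcol

lemma Nc_swap_adj (ρ σ : Equiv.Perm (Fin d)) (c : Fin r → Fin d)
    (hq : (q : ℕ) = (p : ℕ) + 1) :
    Nc ρ σ (c ∘ Equiv.swap p q) = Nc ρ σ c := by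
  have hpq : p ≠ q := by intro h; rw [h] at hq; omega
  rcases lt_trichotomy (c p) (c q) with h | h | h
  · exact (Nc_swap_of_lt ρ σ c hq h).symm
  · have : c ∘ Equiv.swap p q = c := by
      funext k
      rcases eq_or_ne k p with rfl | hk1
      · simp [Equiv.swap_apply_left, h.symm]
      · rcases eq_or_ne k q with rfl | hk2
        · simp [Equiv.swap_apply_right, h]
        · simp [Equiv.swap_apply_of_ne_of_ne hk1 hk2]
    rw [this]
  · have hlt : (c ∘ Equiv.swap p q) p < (c ∘ Equiv.swap p q) q := by
      simpa [Equiv.swap_apply_left, Equiv.swap_apply_right] using h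
    have := Nc_swap_of_lt ρ σ (c ∘ Equiv.swap p q) hq hlt
    rw [this]
    congr 1
    funext k
    simp [Function.comp_apply, Equiv.swap_apply_self]

lemma Nc_comp (ρ σ : Equiv.Perm (Fin d)) (c : Fin r → Fin d) (e : Equiv.Perm (Fin r)) :
    Nc ρ σ (c ∘ e) = Nc ρ σ c := by
  revert c
  match r with
  | 0 =>
    intro c
    have : (e : Fin 0 → Fin 0) = id := by funext k; exact absurd k.2 (by omega)
    rw [this]; rfl
  | Nat.succ n =>
    have he : e ∈ Submonoid.closure
        (Set.range fun i : Fin n => Equiv.swap (Fin.castSucc i) (Fin.succ i)) := by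
      rw [Equiv.Perm.mclosure_swap_castSucc_succ]; trivial
    induction he using Submonoid.closure_induction with
    | mem x hx =>
      obtain ⟨i, rfl⟩ := hx
      intro c
      exact Nc_swap_adj ρ σ c (by simp)
    | one =>
      intro c
      have : ((1 : Equiv.Perm (Fin (n+1))) : Fin (n+1) → Fin (n+1)) = id := rfl
      rw [this]; rfl
    | mul x y hx hy ihx ihy =>
      intro c
      have : c ∘ (x * y : Equiv.Perm (Fin (n+1))) = (c ∘ x) ∘ y := rfl
      rw [this, ihy, ihx]

lemma card_sorted_fiber (m : Fin r → Fin d) (hm : Monotone m) :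
    (Finset.univ.filter fun c : Fin r → Fin d => c ∘ Tuple.sort c = m).card =
      Nat.multinomial Finset.univ
        (fun t : Fin d => (Finset.univ.filter fun j => m j = t).card) := by
  have hsm : m ∘ Tuple.sort m = m := by
    rw [Tuple.sort_eq_refl_iff_monotone.mpr hm]
    rfl
  have himg : (Finset.univ.filter fun c : Fin r → Fin d => c ∘ Tuple.sort c = m)
      = Finset.image (fun e : Equiv.Perm (Fin r) => m ∘ e) Finset.univ := by
    ext c
    simp only [mem_filter, mem_univ, true_and, Finset.mem_image]
    constructor
    · intro h
      refine ⟨(Tuple.sort c)⁻¹, ?_⟩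
      funext j
      have : m ((Tuple.sort c)⁻¹ j) = c (Tuple.sort c ((Tuple.sort c)⁻¹ j)) :=
        (congrFun h ((Tuple.sort c)⁻¹ j)).symm
      rw [Equiv.Perm.coe_inv, Equiv.apply_symm_apply] at this
      exact this
    · rintro ⟨e, rfl⟩
      rw [Tuple.comp_perm_comp_sort_eq_comp_sort]
      exact hsm
  set k : Fin d → ℕ := fun t => (Finset.univ.filter fun j => m j = t).card with hk
  have hstab : (Finset.univ.filter fun e : Equiv.Perm (Fin r) => m ∘ e = m).card
      = ∏ t : Fin d, Nat.factorial (k t) := by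
    have h1 := DomMulAct.stabilizer_card m
    rw [Fintype.card_subtype] at h1
    have h2 : ∀ t : Fin d, Fintype.card {a : Fin r // m a = t} = k t := by
      intro t; rw [Fintype.card_subtype]
    calc (Finset.univ.filter fun e : Equiv.Perm (Fin r) => m ∘ e = m).card
        = ∏ t : Fin d, Nat.factorial (Fintype.card {a : Fin r // m a = t}) := h1
      _ = ∏ t : Fin d, Nat.factorial (k t) := by
          apply Finset.prod_congr rfl; intro t _; rw [h2 t]
  have hfib : ∀ c₀ ∈ Finset.image (fun e : Equiv.Perm (Fin r) => m ∘ e) Finset.univ,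
      (Finset.univ.filter fun e : Equiv.Perm (Fin r) => m ∘ e = c₀).card
        = (Finset.univ.filter fun e : Equiv.Perm (Fin r) => m ∘ e = m).card := by
    intro c₀ hc₀
    obtain ⟨e₀, _, rfl⟩ := Finset.mem_image.mp hc₀
    apply Finset.card_bij' (fun e _ => e * e₀⁻¹) (fun u _ => u * e₀)
    · intro e he
      rw [Finset.mem_filter] at he ⊢
      refine ⟨Finset.mem_univ _, ?_⟩
      funext j
      have := congrFun he.2 (e₀⁻¹ j)
      simp only [Function.comp_apply] at this ⊢
      rw [Equiv.Perm.mul_apply, this, Equiv.Perm.coe_inv, Equiv.apply_symm_apply]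
    · intro u hu
      rw [Finset.mem_filter] at hu ⊢
      refine ⟨Finset.mem_univ _, ?_⟩
      funext j
      have := congrFun hu.2 (e₀ j)
      simp only [Function.comp_apply] at this ⊢
      rw [Equiv.Perm.mul_apply, this]
    · intro e _; group
    · intro u _; group
  have hcount : (Finset.image (fun e : Equiv.Perm (Fin r) => m ∘ e) Finset.univ).card
      * ∏ t : Fin d, Nat.factorial (k t) = Nat.factorial r := by
    have h3 := Finset.card_eq_sum_card_fiberwise
      (f := fun e : Equiv.Perm (Fin r) => m ∘ e) (s := Finset.univ)
      (t := Finset.image (fun e : Equiv.Perm (Fin r) => m ∘ e) Finset.univ)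
      (fun e _ => Finset.mem_image_of_mem _ (Finset.mem_univ e))
    rw [Finset.sum_congr rfl hfib, Finset.sum_const, smul_eq_mul, hstab] at h3
    rw [← h3, Finset.card_univ, Fintype.card_perm, Fintype.card_fin]
  have hksum : ∑ t : Fin d, k t = r := by
    have h4 := Finset.card_eq_sum_card_fiberwise
      (f := m) (s := Finset.univ) (t := Finset.univ) (fun j _ => Finset.mem_univ (m j))
    rw [Finset.card_univ, Fintype.card_fin] at h4
    exact h4.symm
  have hmul := Nat.multinomial_spec Finset.univ k
  rw [hksum] at hmul
  have hpos : 0 < ∏ t : Fin d, Nat.factorial (k t) :=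
    Finset.prod_pos (fun _ _ => Nat.factorial_pos _)
  rw [himg]
  apply Nat.eq_of_mul_eq_mul_right hpos
  rw [hcount, ← hmul, mul_comm]

end Stmt19Aux

open Stmt19Aux in
open scoped Classical in
/-- The total number of `r`-step walks from `ρ` to `σ` equals the sum, over all
monotone `r`-step walks `W` from `ρ` to `σ`, of the multinomial coefficient
`r! / (m₂(W)! ⋯ m_d(W)!)` of the colour multiplicities of `W`. -/
theorem stmt19 (d r : ℕ) (ρ σ : Equiv.Perm (Fin d)) :
    (Finset.univ.filter (fun W : Fin r → Step d => ρ * stepProd W = σ)).card =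
      ∑ W ∈ Finset.univ.filter (fun W : Fin r → Step d =>
          ρ * stepProd W = σ ∧ Monotone fun j => colour (W j)),
        Nat.multinomial Finset.univ
          (fun t : Fin d => (Finset.univ.filter (fun j => colour (W j) = t)).card) := by
  classical
  have hL : (Finset.univ.filter (fun W : Fin r → Step d => ρ * stepProd W = σ)).card
      = ∑ c : Fin r → Fin d, Nc ρ σ c := by
    rw [Finset.card_eq_sum_card_fiberwise
      (f := word) (t := Finset.univ) (fun _ _ => Finset.mem_univ _)]
    apply Finset.sum_congr rfl
    intro c _
    unfold Nc
    rw [Finset.filter_filter]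
  have hL2 : ∑ c : Fin r → Fin d, Nc ρ σ c
      = ∑ m ∈ Finset.univ.filter (fun m : Fin r → Fin d => Monotone m),
          (Finset.univ.filter fun c : Fin r → Fin d => c ∘ Tuple.sort c = m).card
            * Nc ρ σ m := by
    rw [← Finset.sum_fiberwise_of_maps_to (g := fun c : Fin r → Fin d => c ∘ Tuple.sort c)
      (t := Finset.univ.filter (fun m : Fin r → Fin d => Monotone m))
      (fun c _ => Finset.mem_filter.mpr ⟨Finset.mem_univ _, Tuple.monotone_sort c⟩)
      (f := Nc ρ σ)]
    apply Finset.sum_congr rfl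
    intro m hm
    have hcongr : ∀ c ∈ Finset.univ.filter
        (fun c : Fin r → Fin d => c ∘ Tuple.sort c = m), Nc ρ σ c = Nc ρ σ m := by
      intro c hc
      have hcm := (Finset.mem_filter.mp hc).2
      rw [← hcm]
      exact (Nc_comp ρ σ c (Tuple.sort c)).symm
    rw [Finset.sum_congr rfl hcongr, Finset.sum_const, smul_eq_mul]
  have hR : (∑ W ∈ Finset.univ.filter (fun W : Fin r → Step d =>
          ρ * stepProd W = σ ∧ Monotone fun j => colour (W j)),
        Nat.multinomial Finset.univ
          (fun t : Fin d => (Finset.univ.filter (fun j => colour (W j) = t)).card))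
      = ∑ m ∈ Finset.univ.filter (fun m : Fin r → Fin d => Monotone m),
          Nc ρ σ m * Nat.multinomial Finset.univ
            (fun t : Fin d => (Finset.univ.filter fun j => m j = t).card) := by
    rw [← Finset.sum_fiberwise_of_maps_to (g := word)
      (t := Finset.univ.filter (fun m : Fin r → Fin d => Monotone m))
      (fun W hW => Finset.mem_filter.mpr
        ⟨Finset.mem_univ _, (Finset.mem_filter.mp hW).2.2⟩)]
    apply Finset.sum_congr rfl
    intro m hm
    have hmono : Monotone m := (Finset.mem_filter.mp hm).2
    have hcongr : ∀ W ∈ (Finset.univ.filter (fun W : Fin r → Step d =>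
          ρ * stepProd W = σ ∧ Monotone fun j => colour (W j))).filter
          (fun W => word W = m),
        Nat.multinomial Finset.univ
          (fun t : Fin d => (Finset.univ.filter (fun j => colour (W j) = t)).card)
          = Nat.multinomial Finset.univ
            (fun t : Fin d => (Finset.univ.filter fun j => m j = t).card) := by
      intro W hW
      have hw : word W = m := (Finset.mem_filter.mp hW).2
      have hw' : ∀ j, colour (W j) = m j := fun j => congrFun hw j
      simp only [hw']
    rw [Finset.sum_congr rfl hcongr, Finset.sum_const, smul_eq_mul]
    congr 1
    have hset : (Finset.univ.filter (fun W : Fin r → Step d =>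
          ρ * stepProd W = σ ∧ Monotone fun j => colour (W j))).filter
          (fun W => word W = m)
        = Finset.univ.filter (fun W : Fin r → Step d =>
            ρ * stepProd W = σ ∧ word W = m) := by
      ext W
      simp only [Finset.mem_filter, Finset.mem_univ, true_and]
      constructor
      · rintro ⟨⟨h1, _⟩, h2⟩; exact ⟨h1, h2⟩
      · rintro ⟨h1, h2⟩
        refine ⟨⟨h1, ?_⟩, h2⟩
        show Monotone (word W)
        rw [h2]; exact hmono
    rw [hset]
    rfl
  rw [hL, hL2, hR]
  apply Finset.sum_congr rfl
  intro m hm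
  have hmono : Monotone m := (Finset.mem_filter.mp hm).2
  rw [card_sorted_fiber m hmono, mul_comm]
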